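/- For d ≥ 2, writing |P_n^d| = ∑_{j=0}^d c(d,j) n^j, the coefficient of n^{d-2} is c(d,d-2) = 2^{d-2}(d+4)/(6·(d−2)!). -/

import Mathlib

open Finset Polynomial


lemma castChooseProd (m d : ℕ) :
    (m.choose d : ℚ) * d.factorial = ∏ i ∈ range d, ((m : ℚ) - i) := by
  rcases le_or_gt d m with h | h
  · have h1 : (m.descFactorial d : ℚ) = ∏ i ∈ range d, ((m : ℚ) - i) := by
      rw [Nat.descFactorial_eq_prod_range, Nat.cast_prod]
      refine Finset.prod_congr rfl fun i hi => ?_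
      rw [Nat.cast_sub (le_trans (le_of_lt (Finset.mem_range.mp hi)) h)]
    rw [← h1, Nat.descFactorial_eq_factorial_mul_choose, Nat.cast_mul, mul_comm]
  · rw [Nat.choose_eq_zero_of_lt h, Nat.cast_zero, zero_mul, eq_comm]
    apply Finset.prod_eq_zero (Finset.mem_range.mpr h)
    simp



lemma sumPowTwo (s : Finset ℕ) (f : ℕ → ℚ) :
    (∑ t ∈ s.powersetCard 2, ∏ i ∈ t, f i) * 2
      = (∑ i ∈ s, f i) ^ 2 - ∑ i ∈ s, (f i) ^ 2 := by
  induction s using Finset.induction with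
  | empty =>
    rw [show (∅ : Finset ℕ).powersetCard 2 = ∅ by simp]
    simp
  | insert a s ha ih =>
    have hdisj : Disjoint (s.powersetCard 2) ((s.powersetCard 1).image (insert a)) := by
      rw [Finset.disjoint_right]
      intro t ht ht2
      obtain ⟨u, hu, rfl⟩ := Finset.mem_image.mp ht
      have := Finset.mem_powersetCard.mp ht2
      exact ha (this.1 (Finset.mem_insert_self a u))
    have hinj : Set.InjOn (insert a) ((s.powersetCard 1 : Finset (Finset ℕ)) : Set (Finset ℕ)) := by
      intro u hu v hv huv
      rw [Finset.mem_coe] at hu hv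
      have hu' := (Finset.mem_powersetCard.mp hu).1
      have hv' := (Finset.mem_powersetCard.mp hv).1
      have hau : a ∉ u := fun h => ha (hu' h)
      have hav : a ∉ v := fun h => ha (hv' h)
      rw [← Finset.erase_insert hau, ← Finset.erase_insert hav, huv]
    rw [Finset.powersetCard_succ_insert ha, Finset.sum_union hdisj, Finset.sum_image hinj,
      Finset.powersetCard_one, Finset.sum_map]
    have hprod : ∀ x ∈ s, ∏ i ∈ insert a {x}, f i = f a * f x := by
      intro x hx
      rw [Finset.prod_insert (by simp; rintro rfl; exact ha hx), Finset.prod_singleton]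
    simp only [Function.Embedding.coeFn_mk]
    rw [Finset.sum_congr rfl hprod, ← Finset.mul_sum, Finset.sum_insert ha,
      Finset.sum_insert ha, add_mul, ih]
    ring


lemma sumCast (n : ℕ) : ∑ i ∈ range n, (i : ℚ) = n * (n - 1) / 2 := by
  induction n with
  | zero => simp
  | succ m ih => rw [Finset.sum_range_succ, ih]; push_cast; ring

lemma sumSq (n : ℕ) : ∑ i ∈ range n, (i : ℚ) ^ 2 = n * (n - 1) * (2 * n - 1) / 6 := by
  induction n with
  | zero => simp
  | succ m ih => rw [Finset.sum_range_succ, ih]; push_cast; ring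

lemma B0 (e : ℕ) : ∑ k ∈ range (e + 1), ((e.choose k : ℚ)) = 2 ^ e := by
  rw [← Nat.cast_sum, Nat.sum_range_choose]; push_cast; ring

lemma B1 (e : ℕ) :
    ∑ k ∈ range (e + 2), (((e + 1).choose k : ℚ)) * k = (e + 1) * 2 ^ e := by
  rw [Finset.sum_range_succ']
  simp only [Nat.cast_zero, mul_zero, add_zero]
  have key : ∀ k, (((e + 1).choose (k + 1) : ℚ)) * (k + 1) = (e + 1) * (e.choose k) := by
    intro k
    have := Nat.add_one_mul_choose_eq e k
    have h2 : ((Nat.succ e * e.choose k : ℕ) : ℚ) = (((e+1).choose (k+1) * (k+1) : ℕ) : ℚ) := by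
      rw [this]
    push_cast at h2
    push_cast
    linarith
  have : ∑ k ∈ range (e + 1), (((e + 1).choose (k + 1) : ℚ)) * ((k : ℕ) + 1 : ℕ)
      = ∑ k ∈ range (e + 1), (e + 1 : ℚ) * (e.choose k) := by
    refine Finset.sum_congr rfl fun k _ => ?_
    push_cast
    exact key k
  rw [this, ← Finset.mul_sum, B0]

lemma B2 (e : ℕ) :
    ∑ k ∈ range (e + 2), (((e + 1).choose k : ℚ)) * (k * (k - 1))
      = (e + 1) * e * 2 ^ e / 2 := by
  rcases Nat.eq_zero_or_pos e with rfl | he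
  · norm_num [Finset.sum_range_succ]
  · obtain ⟨f, rfl⟩ : ∃ f, e = f + 1 := ⟨e - 1, by omega⟩
    rw [Finset.sum_range_succ', Finset.sum_range_succ']
    simp only [Nat.cast_zero, Nat.cast_one, mul_zero, add_zero, zero_mul, sub_self, mul_one,
      zero_sub, zero_mul]
    have key : ∀ k : ℕ, (((f + 2).choose (k + 2) : ℚ)) * ((k + 2 : ℕ) : ℚ) * ((k + 1 : ℕ) : ℚ)
        = (f + 2) * (f + 1) * (f.choose k) := by
      intro k
      have h1 := Nat.add_one_mul_choose_eq (f + 1) (k + 1)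
      have h2 := Nat.add_one_mul_choose_eq f k
      have h1' : ((Nat.succ (f+1) * (f+1).choose (k+1) : ℕ) : ℚ)
          = (((f + 2).choose (k + 2) * (k + 2) : ℕ) : ℚ) := by rw [h1]
      have h2' : ((Nat.succ f * f.choose k : ℕ) : ℚ)
          = (((f + 1).choose (k + 1) * (k + 1) : ℕ) : ℚ) := by rw [h2]
      push_cast at h1' h2'
      push_cast
      nlinarith [h1', h2']
    have : ∑ k ∈ range (f + 1), (((f + 1 + 1).choose (k + 1 + 1) : ℚ)) * (↑(k + 1 + 1) * (↑(k + 1 + 1) - 1))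
        = ∑ k ∈ range (f + 1), ((f : ℚ) + 2) * ((f : ℚ) + 1) * (f.choose k) := by
      refine Finset.sum_congr rfl fun k _ => ?_
      have := key k
      push_cast at this ⊢
      linarith
    rw [this, ← Finset.mul_sum, B0]
    push_cast
    ring

theorem stmt_16 (d : ℕ) (hd : 2 ≤ d) (p : Polynomial ℚ)
    (hp : ∀ n : ℕ, p.eval (n : ℚ) =
      ∑ k ∈ Finset.range d, ((d - 1).choose k * (d + n - k).choose d : ℚ)) :
    p.coeff (d - 2) = 2 ^ (d - 2) * (d + 4) / (6 * ((d - 2).factorial : ℚ)) := by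
  obtain ⟨e, rfl⟩ : ∃ e, d = e + 2 := ⟨d - 2, by omega⟩
  have hd1 : e + 2 - 1 = e + 1 := rfl
  have hd2 : e + 2 - 2 = e := by omega
  simp only [hd1] at hp
  rw [hd2]
  have hfact : ((e + 2).factorial : ℚ) ≠ 0 := by positivity
  set q : Polynomial ℚ := Polynomial.C ((((e + 2).factorial : ℚ))⁻¹) *
    ∑ k ∈ range (e + 2), Polynomial.C (((e + 1).choose k : ℚ)) *
      ∏ i ∈ range (e + 2), (Polynomial.X + Polynomial.C ((e : ℚ) + 2 - k - i)) with hqdef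
  have hterm : ∀ n : ℕ, ∀ k ∈ range (e + 2),
      (((e + 2 + n - k).choose (e + 2) : ℚ)) * ((e + 2).factorial : ℚ)
        = ∏ i ∈ range (e + 2), ((n : ℚ) + ((e : ℚ) + 2 - k - i)) := by
    intro n k hk
    have hk' : k ≤ e + 2 + n := by
      have := Finset.mem_range.mp hk; omega
    rw [castChooseProd]
    refine Finset.prod_congr rfl fun i _ => ?_
    rw [Nat.cast_sub hk']
    push_cast
    ring
  have hq : ∀ n : ℕ, q.eval (n : ℚ) =
      ∑ k ∈ range (e + 2), (((e + 1).choose k : ℚ) * ((e + 2 + n - k).choose (e + 2) : ℚ)) := by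
    intro n
    rw [hqdef]
    simp only [eval_mul, eval_C, eval_finset_sum, eval_prod, eval_add, eval_X]
    rw [inv_mul_eq_iff_eq_mul₀ hfact, Finset.mul_sum]
    refine Finset.sum_congr rfl fun k hk => ?_
    rw [← hterm n k hk]
    ring
  have hpq : p = q := by
    apply Polynomial.eq_of_infinite_eval_eq
    apply Set.Infinite.mono (s := Set.range ((↑) : ℕ → ℚ))
    · rintro x ⟨n, rfl⟩
      simp only [Set.mem_setOf_eq]
      rw [hp n, hq n]
    · exact Set.infinite_range_of_injective Nat.cast_injective
  rw [hpq, hqdef]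
  -- abbreviations for the quadratic coefficients
  have key : ∀ k : ℕ,
      (∑ u ∈ (range (e + 2)).powersetCard 2, ∏ i ∈ u, ((e : ℚ) + 2 - (k : ℚ) - (i : ℚ)))
        = (((e:ℚ)+2)^2*((e:ℚ)+3)^2/4 - ((e:ℚ)+2)*((e:ℚ)+3)*(2*(e:ℚ)+5)/6)/2
          + (-((e:ℚ)+2)^2*((e:ℚ)+1)/2) * k
          + (((e:ℚ)+2)*((e:ℚ)+1)/2) * ((k:ℚ) * ((k:ℚ) - 1)) := by
    intro k
    have h2 := sumPowTwo (range (e + 2)) (fun i => (e : ℚ) + 2 - (k : ℚ) - (i : ℚ))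
    have hS1 : ∑ i ∈ range (e + 2), ((e : ℚ) + 2 - (k : ℚ) - (i : ℚ))
        = ((e:ℚ)+2) * ((e : ℚ) + 2 - k) - ((e:ℚ)+2)*(((e:ℚ)+2)-1)/2 := by
      rw [Finset.sum_sub_distrib, Finset.sum_const, card_range, sumCast (e+2)]
      push_cast
      ring
    have hS2 : ∑ i ∈ range (e + 2), ((e : ℚ) + 2 - (k : ℚ) - (i : ℚ))^2
        = ((e:ℚ)+2) * ((e : ℚ) + 2 - k)^2 - 2*((e:ℚ)+2-k)*(((e:ℚ)+2)*(((e:ℚ)+2)-1)/2)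
          + ((e:ℚ)+2)*(((e:ℚ)+2)-1)*(2*((e:ℚ)+2)-1)/6 := by
      have expand : ∀ i ∈ range (e + 2), ((e : ℚ) + 2 - (k : ℚ) - (i : ℚ))^2
          = (((e:ℚ)+2-k)^2 - (2*((e:ℚ)+2-k))*(i:ℚ)) + (i:ℚ)^2 := fun i _ => by ring
      rw [Finset.sum_congr rfl expand, Finset.sum_add_distrib, Finset.sum_sub_distrib,
        ← Finset.mul_sum, Finset.sum_const, card_range, sumCast (e+2), sumSq (e+2)]
      push_cast
      ring
    rw [hS1, hS2] at h2
    linear_combination h2 / 2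
  rw [Polynomial.coeff_C_mul, Polynomial.finset_sum_coeff]
  have hco : ∀ k ∈ range (e + 2),
      (Polynomial.C (((e + 1).choose k : ℚ)) *
        ∏ i ∈ range (e + 2), (Polynomial.X + Polynomial.C ((e : ℚ) + 2 - k - i))).coeff e
      = ((e + 1).choose k : ℚ) *
          ((((e:ℚ)+2)^2*((e:ℚ)+3)^2/4 - ((e:ℚ)+2)*((e:ℚ)+3)*(2*(e:ℚ)+5)/6)/2
            + (-((e:ℚ)+2)^2*((e:ℚ)+1)/2) * k
            + (((e:ℚ)+2)*((e:ℚ)+1)/2) * ((k:ℚ) * ((k:ℚ) - 1))) := by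
    intro k hk
    have hle : e ≤ (range (e + 2)).card := by rw [card_range]; omega
    rw [Polynomial.coeff_C_mul, Finset.prod_X_add_C_coeff _ _ hle, card_range,
      show e + 2 - e = 2 by omega, key k]
  rw [Finset.sum_congr rfl hco]
  have split : ∑ k ∈ range (e + 2), (((e + 1).choose k : ℚ) *
        ((((e:ℚ)+2)^2*((e:ℚ)+3)^2/4 - ((e:ℚ)+2)*((e:ℚ)+3)*(2*(e:ℚ)+5)/6)/2
          + (-((e:ℚ)+2)^2*((e:ℚ)+1)/2) * k
          + (((e:ℚ)+2)*((e:ℚ)+1)/2) * ((k:ℚ) * ((k:ℚ) - 1))))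
      = ((((e:ℚ)+2)^2*((e:ℚ)+3)^2/4 - ((e:ℚ)+2)*((e:ℚ)+3)*(2*(e:ℚ)+5)/6)/2)
          * (∑ k ∈ range (e + 2), (((e + 1).choose k : ℚ)))
        + (-((e:ℚ)+2)^2*((e:ℚ)+1)/2)
          * (∑ k ∈ range (e + 2), (((e + 1).choose k : ℚ)) * k)
        + (((e:ℚ)+2)*((e:ℚ)+1)/2)
          * (∑ k ∈ range (e + 2), (((e + 1).choose k : ℚ)) * ((k:ℚ) * ((k:ℚ) - 1))) := by
    rw [Finset.mul_sum, Finset.mul_sum, Finset.mul_sum, ← Finset.sum_add_distrib,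
      ← Finset.sum_add_distrib]
    exact Finset.sum_congr rfl fun k _ => by ring
  have b0 : ∑ k ∈ range (e + 2), (((e + 1).choose k : ℚ)) = 2 ^ (e + 1) := by
    simpa using B0 (e + 1)
  rw [split, b0, B1 e, B2 e]
  have hfac2 : ((e + 2).factorial : ℚ) = ((e:ℚ)+2) * ((e:ℚ)+1) * (e.factorial : ℚ) := by
    rw [show e + 2 = (e + 1) + 1 from rfl, Nat.factorial_succ, Nat.factorial_succ]
    push_cast
    ring
  have hef : (e.factorial : ℚ) ≠ 0 := by positivity
  rw [hfac2]
  push_cast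
  have h1 : ((e:ℚ)+2) ≠ 0 := by positivity
  have h2 : ((e:ℚ)+1) ≠ 0 := by positivity
  field_simp
  ring
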